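/- The value of the multipartite Bell functional I on the efficiency-η version of the no-signaling strategy p(a⃗|x⃗) = (1/P^{N−1})·1[Σa_i ≡ Πx_i mod P] equals η^N(M_1···M_N − 1) − η(M_1 + ··· + M_N − N). -/

import Mathlib

/-- Multipartite Bell coefficient (Φ = `none` outputs give `0`). -/
def multiBellCoeff (P N : ℕ) (av : Fin N → Option ℕ) (x : Fin N → ℕ) : ℝ :=
  if ∀ i, (av i).isSome then
    (if (∑ i, (av i).getD 0) % P = (∏ i, x i) % P then
        (if ∀ i, x i = 1 then 0 else 1)
      else -(P : ℝ) ^ (2 * N))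
  else 0

/-- Efficiency-`η` version of the multipartite no-signaling strategy
`p(a⃗|x⃗) = (1/P^{N−1})·1[Σa_i ≡ Πx_i mod P]`: with `k` detected parties the
probability is `η^k (1−η)^{N−k}` times the `k`-party marginal of `p`
(which is `1/P^k` for `k < N`). -/
noncomputable def multiNsEta (P N : ℕ) (η : ℝ) (av : Fin N → Option ℕ)
    (x : Fin N → ℕ) : ℝ :=
  let k := (Finset.univ.filter fun i => (av i).isSome).card
  if ∀ i, (av i).isSome then
    η ^ N * (if (∑ i, (av i).getD 0) % P = (∏ i, x i) % P then
        1 / (P : ℝ) ^ (N - 1) else 0)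
  else η ^ k * (1 - η) ^ (N - k) * (1 / (P : ℝ) ^ k)

/-- Outcome alphabet `{0,…,P−1} ∪ {Φ}`. -/
def optOut (P : ℕ) : Finset (Option ℕ) := insert none ((Finset.range P).image some)

lemma count_aux (P : ℕ) (hP : 0 < P) {N : ℕ} (t : Fin N → Finset ℕ) (i₀ : Fin N)
    (h : t i₀ = Finset.range P) (c : ℕ) :
    ((Fintype.piFinset t).filter fun a => (∑ j, a j) % P = c % P).card
      = ∏ j ∈ Finset.univ.erase i₀, (t j).card := by
  haveI : NeZero P := ⟨hP.ne'⟩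
  have key : ((Fintype.piFinset t).filter fun a => (∑ j, a j) % P = c % P).card
      = (Fintype.piFinset (Function.update t i₀ {0})).card := by
    refine Finset.card_nbij' (fun a => Function.update a i₀ 0)
      (fun b => Function.update b i₀
        (((c : ZMod P) - ∑ k ∈ Finset.univ.erase i₀, ((b k : ℕ) : ZMod P)).val)) ?_ ?_ ?_ ?_
    · intro a ha
      rw [Finset.mem_coe, Finset.mem_filter] at ha
      rw [Finset.mem_coe, Fintype.mem_piFinset]
      intro j
      rcases eq_or_ne j i₀ with rfl | hj
      · simp [Function.update_self]
      · simp only [Function.update_of_ne hj]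
        exact Fintype.mem_piFinset.1 ha.1 j
    · intro b hb
      dsimp only
      rw [Finset.mem_coe, Fintype.mem_piFinset] at hb
      rw [Finset.mem_coe, Finset.mem_filter]
      constructor
      · rw [Fintype.mem_piFinset]
        intro j
        rcases eq_or_ne j i₀ with rfl | hj
        · rw [Function.update_self, h, Finset.mem_range]
          exact ZMod.val_lt _
        · rw [Function.update_of_ne hj]
          have := hb j
          rwa [Function.update_of_ne hj] at this
      · rw [Finset.sum_update_of_mem (Finset.mem_univ i₀)]
        rw [← ZMod.natCast_eq_natCast_iff']
        push_cast
        rw [ZMod.natCast_rightInverse _, ← Finset.erase_eq]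
        ring
    · intro a ha
      rw [Finset.mem_coe, Finset.mem_filter] at ha
      have hsum : (c : ZMod P) - ∑ k ∈ Finset.univ.erase i₀,
          ((Function.update a i₀ 0 k : ℕ) : ZMod P) = (a i₀ : ZMod P) := by
        have h1 : ∑ k ∈ Finset.univ.erase i₀, ((Function.update a i₀ 0 k : ℕ) : ZMod P)
            = ∑ k ∈ Finset.univ.erase i₀, ((a k : ℕ) : ZMod P) := by
          refine Finset.sum_congr rfl fun k hk => ?_
          rw [Function.update_of_ne (Finset.ne_of_mem_erase hk)]
        have h2 : ((∑ j, a j : ℕ) : ZMod P) = (c : ZMod P) := by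
          rw [ZMod.natCast_eq_natCast_iff']; exact ha.2
        rw [h1]
        rw [← Finset.add_sum_erase _ _ (Finset.mem_univ i₀)] at h2
        push_cast at h2 ⊢
        linear_combination -h2
      dsimp only
      rw [hsum]
      have hlt : a i₀ < P := by
        have := Fintype.mem_piFinset.1 ha.1 i₀
        rwa [h, Finset.mem_range] at this
      rw [ZMod.val_cast_of_lt hlt, Function.update_idem, Function.update_eq_self]
    · intro b hb
      rw [Finset.mem_coe, Fintype.mem_piFinset] at hb
      have h0 : b i₀ = 0 := by
        have := hb i₀
        rwa [Function.update_self, Finset.mem_singleton] at this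
      dsimp only
      rw [Function.update_idem, ← h0, Function.update_eq_self]
  rw [key, Fintype.card_piFinset]
  have : ∀ j : Fin N, (Function.update t i₀ ({0} : Finset ℕ) j).card
      = Function.update (fun j => (t j).card) i₀ 1 j := by
    intro j
    rcases eq_or_ne j i₀ with rfl | hj
    · simp
    · simp [Function.update_of_ne hj]
  rw [Finset.prod_congr rfl fun j _ => this j,
    Finset.prod_update_of_mem (Finset.mem_univ i₀), one_mul, ← Finset.erase_eq]

lemma sum_allSome (P : ℕ) {N : ℕ} (t : Fin N → Finset ℕ) (ht : ∀ j, t j ⊆ Finset.range P)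
    (F : (Fin N → Option ℕ) → ℝ) :
    ∑ av ∈ (Fintype.piFinset fun _ : Fin N => optOut P).filter
        (fun av => ∀ j, ∃ b ∈ t j, av j = some b), F av
      = ∑ a ∈ Fintype.piFinset t, F (fun j => some (a j)) := by
  refine Finset.sum_nbij' (fun av j => (av j).getD 0) (fun a j => some (a j)) ?_ ?_ ?_ ?_ ?_
  · intro av hav
    rw [Finset.mem_filter] at hav
    rw [Fintype.mem_piFinset]
    intro j
    obtain ⟨b, hb, he⟩ := hav.2 j
    simp [he, hb]
  · intro a ha
    rw [Fintype.mem_piFinset] at ha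
    rw [Finset.mem_filter]
    constructor
    · rw [Fintype.mem_piFinset]
      intro j
      simp only [optOut, Finset.mem_insert, Finset.mem_image]
      exact Or.inr ⟨a j, ht j (ha j), rfl⟩
    · intro j
      exact ⟨a j, ha j, rfl⟩
  · intro av hav
    rw [Finset.mem_filter] at hav
    funext j
    obtain ⟨b, hb, he⟩ := hav.2 j
    simp [he]
  · intro a _
    funext j
    rfl
  · intro av hav
    rw [Finset.mem_filter] at hav
    congr 1
    funext j
    obtain ⟨b, hb, he⟩ := hav.2 j
    simp [he]

noncomputable def gg (P : ℕ) (η : ℝ) : Option ℕ → ℝ :=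
  fun o => if o.isSome then η / P else 1 - η

lemma eta_eq (P N : ℕ) (η : ℝ) (av : Fin N → Option ℕ) (x : Fin N → ℕ) :
    multiNsEta P N η av x = if ∀ j, (av j).isSome then
      η ^ N * (if (∑ i, (av i).getD 0) % P = (∏ i, x i) % P then
        1 / (P : ℝ) ^ (N - 1) else 0)
    else ∏ j, gg P η (av j) := by
  by_cases hs : ∀ j, (av j).isSome
  · simp only [multiNsEta, if_pos hs]
  · simp only [multiNsEta, if_neg hs]
    have hk : (Finset.univ.filter fun i => ¬ (av i).isSome = true).card
        = N - (Finset.univ.filter fun i => (av i).isSome).card := by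
      have := Finset.card_filter_add_card_filter_not
        (s := (Finset.univ : Finset (Fin N))) (p := fun i => (av i).isSome = true)
      simp only [Finset.card_univ, Fintype.card_fin] at this
      omega
    unfold gg
    rw [Finset.prod_ite, Finset.prod_const, Finset.prod_const, hk, div_pow]
    ring

lemma sum_optOut (P : ℕ) (f : Option ℕ → ℝ) :
    ∑ o ∈ optOut P, f o = f none + ∑ b ∈ Finset.range P, f (some b) := by
  rw [optOut, Finset.sum_insert (by simp), Finset.sum_image (by simp)]

lemma prod_card_update (P n : ℕ) (i : Fin n) (a₀ : ℕ) (s : Finset (Fin n)) (hs : i ∈ s) :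
    ∏ j ∈ s, ((Function.update (fun _ : Fin n => Finset.range P) i {a₀} j).card)
      = P ^ (s.card - 1) := by
  have h1 : ∀ j : Fin n, (Function.update (fun _ : Fin n => Finset.range P) i ({a₀} : Finset ℕ) j).card
      = Function.update (fun _ : Fin n => P) i 1 j := by
    intro j
    rcases eq_or_ne j i with rfl | hj
    · simp
    · simp [Function.update_of_ne hj]
  rw [Finset.prod_congr rfl fun j _ => h1 j, Finset.prod_update_of_mem hs, one_mul,
    Finset.prod_const, ← Finset.erase_eq, Finset.card_erase_of_mem hs]

theorem multipartite_bell_value_of_ns_strategy (P N : ℕ) (hP : P.Prime) (hN : 2 ≤ N)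
    (M : Fin N → ℕ) (hM : ∀ i, 2 ≤ M i) (hPM : ∀ i, M i < P)
    (η : ℝ) (hη : η ∈ Set.Icc (0 : ℝ) 1) :
    (∑ x ∈ Fintype.piFinset fun i => Finset.Icc 1 (M i),
        ∑ av ∈ Fintype.piFinset fun _ : Fin N => optOut P,
          multiBellCoeff P N av x * multiNsEta P N η av x)
      - ∑ i, ∑ xi ∈ Finset.Icc 2 (M i), ∑ a ∈ Finset.range P,
          ∑ av ∈ (Fintype.piFinset fun _ : Fin N => optOut P).filter
              (fun av => av i = some a),
            multiNsEta P N η av (Function.update (fun _ => 1) i xi)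
    = η ^ N * ((∏ i, (M i : ℝ)) - 1) - η * ((∑ i, (M i : ℝ)) - N) := by
  obtain ⟨n, rfl⟩ : ∃ n, N = n + 2 := ⟨N - 2, by omega⟩
  have hP0 : 0 < P := hP.pos
  have hPR : (0 : ℝ) < P := by exact_mod_cast hP0
  have hPne : (P : ℝ) ≠ 0 := hPR.ne'
  have hpred : ∀ av ∈ Fintype.piFinset fun _ : Fin (n+2) => optOut P,
      ∀ j : Fin (n+2), (av j).isSome → ∃ b ∈ Finset.range P, av j = some b := by
    intro av hav j hj
    have := Fintype.mem_piFinset.1 hav j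
    simp only [optOut, Finset.mem_insert, Finset.mem_image] at this
    rcases this with h | ⟨b, hb, he⟩
    · rw [h] at hj; simp at hj
    · exact ⟨b, hb, he.symm⟩
  have key1 : ∀ x : Fin (n+2) → ℕ,
      ∑ av ∈ Fintype.piFinset fun _ : Fin (n+2) => optOut P,
        multiBellCoeff P (n+2) av x * multiNsEta P (n+2) η av x
      = (if ∀ i, x i = 1 then (0:ℝ) else 1) * η ^ (n+2) := by
    intro x
    have hpt : ∀ av : Fin (n+2) → Option ℕ,
        multiBellCoeff P (n+2) av x * multiNsEta P (n+2) η av x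
        = if (∀ j, (av j).isSome) then
            (if (∑ j, (av j).getD 0) % P = (∏ j, x j) % P then
              (if ∀ i, x i = 1 then (0:ℝ) else 1) * (η ^ (n+2) * (1 / (P:ℝ) ^ (n+1)))
            else 0)
          else 0 := by
      intro av
      simp only [multiBellCoeff, multiNsEta, show n + 2 - 1 = n + 1 from by omega]
      split_ifs <;> ring
    rw [Finset.sum_congr rfl fun av _ => hpt av, ← Finset.sum_filter]
    rw [Finset.filter_congr (q := fun av => ∀ j, ∃ b ∈ Finset.range P, av j = some b)
      (fun av hav => ⟨fun h j => hpred av hav j (h j),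
        fun h j => by obtain ⟨b, _, he⟩ := h j; rw [he]; rfl⟩)]
    rw [sum_allSome P (fun _ => Finset.range P) (fun _ => subset_rfl)]
    simp only [Option.getD_some]
    have hpt2 : ∀ a : Fin (n+2) → ℕ,
        (if (∑ j, a j) % P = (∏ j, x j) % P then
            (if ∀ i, x i = 1 then (0:ℝ) else 1) * (η ^ (n+2) * (1 / (P:ℝ) ^ (n+1)))
          else 0)
        = (if ∀ i, x i = 1 then (0:ℝ) else 1) * (η ^ (n+2) * (1 / (P:ℝ) ^ (n+1))) *
            (if (∑ j, a j) % P = (∏ j, x j) % P then (1:ℝ) else 0) := by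
      intro a; split_ifs <;> ring
    rw [Finset.sum_congr rfl fun a _ => hpt2 a, ← Finset.mul_sum, Finset.sum_boole,
      count_aux P hP0 _ (0 : Fin (n+2)) rfl]
    simp only [Finset.card_range, Finset.prod_const, Finset.card_erase_of_mem (Finset.mem_univ _),
      Finset.card_univ, Fintype.card_fin]
    have : (n + 2 - 1 : ℕ) = n + 1 := by omega
    rw [this]
    push_cast
    field_simp
  have key2 : ∀ (i : Fin (n+2)) (a₀ : ℕ), a₀ ∈ Finset.range P → ∀ x : Fin (n+2) → ℕ,
      ∑ av ∈ (Fintype.piFinset fun _ : Fin (n+2) => optOut P).filter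
          (fun av => av i = some a₀),
        multiNsEta P (n+2) η av x = η / P := by
    intro i a₀ ha₀ x
    obtain ⟨i₀, hi₀⟩ : ∃ i₀ : Fin (n+2), i₀ ≠ i := by
      rcases eq_or_ne i 0 with rfl | h
      · exact ⟨1, by simp [Fin.ext_iff]⟩
      · exact ⟨0, Ne.symm h⟩
    set t : Fin (n+2) → Finset ℕ := Function.update (fun _ => Finset.range P) i {a₀} with htdef
    have hti₀ : t i₀ = Finset.range P := Function.update_of_ne hi₀ _ _
    have htsub : ∀ j, t j ⊆ Finset.range P := by
      intro j
      rcases eq_or_ne j i with rfl | hj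
      · rw [htdef, Function.update_self]
        intro b hb
        rw [Finset.mem_singleton] at hb
        rwa [hb]
      · rw [htdef, Function.update_of_ne hj]
    have hsplit : ∀ av : Fin (n+2) → Option ℕ,
        multiNsEta P (n+2) η av x
        = (∏ j, gg P η (av j)) +
          (if ∀ j, (av j).isSome then
            η ^ (n+2) * (if (∑ j, (av j).getD 0) % P = (∏ j, x j) % P
              then 1 / (P:ℝ) ^ (n+1) else 0) - ∏ j, gg P η (av j)
          else 0) := by
      intro av
      rw [eta_eq, show n + 2 - 1 = n + 1 from by omega]
      split_ifs <;> ring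
    rw [Finset.sum_congr rfl fun av _ => hsplit av, Finset.sum_add_distrib]
    have hT1 : ∑ av ∈ (Fintype.piFinset fun _ : Fin (n+2) => optOut P).filter
        (fun av => av i = some a₀), ∏ j, gg P η (av j) = η / P := by
      rw [Finset.sum_filter]
      have hpt : ∀ av : Fin (n+2) → Option ℕ,
          (if av i = some a₀ then ∏ j, gg P η (av j) else 0)
          = ∏ j, (if j = i then (if av j = some a₀ then η / P else 0) else gg P η (av j)) := by
        intro av
        by_cases hc : av i = some a₀
        · rw [if_pos hc]
          refine Finset.prod_congr rfl fun j _ => ?_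
          by_cases hj : j = i
          · subst hj; rw [if_pos rfl, if_pos hc, hc]; simp [gg]
          · rw [if_neg hj]
        · rw [if_neg hc]
          symm
          refine Finset.prod_eq_zero (Finset.mem_univ i) ?_
          rw [if_pos rfl, if_neg hc]
      rw [Finset.sum_congr rfl fun av _ => hpt av,
        ← Finset.prod_univ_sum (fun _ => optOut P)
          (fun j o => if j = i then (if o = some a₀ then η / P else 0) else gg P η o)]
      have hfac : ∀ j : Fin (n+2), (∑ o ∈ optOut P,
          if j = i then (if o = some a₀ then η / P else 0) else gg P η o)
          = if j = i then η / P else 1 := by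
        intro j
        by_cases hj : j = i
        · simp only [if_pos hj]
          rw [sum_optOut]
          simp only [reduceCtorEq, if_false, Option.some.injEq, zero_add]
          rw [Finset.sum_ite_eq' (Finset.range P) a₀ (fun _ => η / P), if_pos ha₀]
        · simp only [if_neg hj]
          rw [sum_optOut]
          simp only [gg, Option.isSome_none, Option.isSome_some, if_true,
            Bool.false_eq_true, if_false]
          rw [Finset.sum_const, Finset.card_range, nsmul_eq_mul]
          field_simp
          ring
      rw [Finset.prod_congr rfl fun j _ => hfac j, Finset.prod_ite_eq' Finset.univ i
        (fun _ => η / P), if_pos (Finset.mem_univ i)]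
    have hT2 : ∑ av ∈ (Fintype.piFinset fun _ : Fin (n+2) => optOut P).filter
        (fun av => av i = some a₀),
        (if ∀ j, (av j).isSome then
            η ^ (n+2) * (if (∑ j, (av j).getD 0) % P = (∏ j, x j) % P
              then 1 / (P:ℝ) ^ (n+1) else 0) - ∏ j, gg P η (av j)
          else 0) = 0 := by
      rw [← Finset.sum_filter, Finset.filter_filter]
      rw [Finset.filter_congr (q := fun av => ∀ j, ∃ b ∈ t j, av j = some b) ?_]
      swap
      · intro av hav
        constructor
        · rintro ⟨hc, hs⟩ j
          rcases eq_or_ne j i with rfl | hj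
          · exact ⟨a₀, by rw [htdef, Function.update_self, Finset.mem_singleton], hc⟩
          · obtain ⟨b, hb, he⟩ := hpred av hav j (hs j)
            exact ⟨b, by rw [htdef, Function.update_of_ne hj]; exact hb, he⟩
        · intro h
          constructor
          · obtain ⟨b, hb, he⟩ := h i
            rw [htdef, Function.update_self, Finset.mem_singleton] at hb
            rw [he, hb]
          · intro j
            obtain ⟨b, _, he⟩ := h j
            rw [he]; rfl
      rw [sum_allSome P t htsub]
      simp only [Option.getD_some]
      have hgg : ∀ a : Fin (n+2) → ℕ, ∏ j, gg P η (some (a j)) = (η / P) ^ (n+2) := by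
        intro a
        simp only [gg, Option.isSome_some, if_true]
        rw [Finset.prod_const, Finset.card_univ, Fintype.card_fin]
      have hpt2 : ∀ a : Fin (n+2) → ℕ,
          (η ^ (n+2) * (if (∑ j, a j) % P = (∏ j, x j) % P then 1 / (P:ℝ) ^ (n+1) else 0)
            - ∏ j, gg P η (some (a j)))
          = η ^ (n+2) * (1 / (P:ℝ) ^ (n+1)) *
              (if (∑ j, a j) % P = (∏ j, x j) % P then (1:ℝ) else 0) - (η / P) ^ (n+2) := by
        intro a
        rw [hgg a]
        split_ifs <;> ring
      rw [Finset.sum_congr rfl fun a _ => hpt2 a, Finset.sum_sub_distrib, ← Finset.mul_sum,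
        Finset.sum_boole, count_aux P hP0 t i₀ hti₀, Finset.sum_const, nsmul_eq_mul]
      have hc1 : ∏ j ∈ Finset.univ.erase i₀, (t j).card = P ^ n := by
        rw [htdef, prod_card_update P (n+2) i a₀ _ (Finset.mem_erase.2 ⟨Ne.symm hi₀, Finset.mem_univ i⟩)]
        rw [Finset.card_erase_of_mem (Finset.mem_univ i₀), Finset.card_univ, Fintype.card_fin]
        congr 1
      have hc2 : (Fintype.piFinset t).card = P ^ (n+1) := by
        rw [Fintype.card_piFinset, htdef,
          prod_card_update P (n+2) i a₀ Finset.univ (Finset.mem_univ i),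
          Finset.card_univ, Fintype.card_fin]
        congr 1
      rw [hc1, hc2]
      push_cast
      field_simp
      have h1 : (P:ℝ) ^ 2 * (P:ℝ)⁻¹ ^ 2 = 1 := by rw [← mul_pow, mul_inv_cancel₀ hPne, one_pow]
      have h2 : (P:ℝ) ^ (n * 2) * (P:ℝ)⁻¹ ^ n = (P:ℝ) ^ n := by
        rw [mul_comm n 2, pow_mul', sq, mul_assoc, ← mul_pow, mul_inv_cancel₀ hPne, one_pow, mul_one]
      linear_combination (-(η ^ 2 * η ^ n * (P:ℝ) ^ (n * 2) * (P:ℝ)⁻¹ ^ n)) * h1 - (η ^ 2 * η ^ n) * h2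
    rw [hT1, hT2, add_zero]
  have hxsum : ∑ x ∈ Fintype.piFinset (fun i => Finset.Icc 1 (M i)),
      (if ∀ i, x i = 1 then (0:ℝ) else 1) = (∏ i, (M i : ℝ)) - 1 := by
    have h1 : ∀ x : Fin (n+2) → ℕ, (if ∀ i, x i = 1 then (0:ℝ) else 1)
        = 1 - (if x = (fun _ => 1) then (1:ℝ) else 0) := by
      intro x
      by_cases h : ∀ i, x i = 1
      · rw [if_pos h, if_pos (funext h)]; ring
      · rw [if_neg h, if_neg (fun he => h fun i => congrFun he i)]; ring
    rw [Finset.sum_congr rfl fun x _ => h1 x, Finset.sum_sub_distrib, Finset.sum_const,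
      Finset.sum_ite_eq' _ (fun _ => 1) (fun _ => (1:ℝ)),
      if_pos (Fintype.mem_piFinset.2 fun i => Finset.mem_Icc.2
        ⟨le_refl 1, by have := hM i; omega⟩)]
    rw [Fintype.card_piFinset]
    simp only [Nat.card_Icc, Nat.add_sub_cancel]
    rw [nsmul_eq_mul, mul_one, Nat.cast_prod]
  have hsec : ∀ i : Fin (n+2), ∑ xi ∈ Finset.Icc 2 (M i), ∑ a ∈ Finset.range P,
      ∑ av ∈ (Fintype.piFinset fun _ : Fin (n+2) => optOut P).filter
          (fun av => av i = some a),
        multiNsEta P (n+2) η av (Function.update (fun _ => 1) i xi)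
      = ((M i : ℝ) - 1) * η := by
    intro i
    rw [Finset.sum_congr rfl fun xi _ => Finset.sum_congr rfl fun a ha => key2 i a ha _]
    simp only [Finset.sum_const, Finset.card_range, nsmul_eq_mul, Nat.card_Icc]
    have hp : (P:ℝ) * (η / P) = η := by field_simp
    rw [hp, show M i + 1 - 2 = M i - 1 from by omega,
      Nat.cast_sub (by have := hM i; omega : 1 ≤ M i)]
    norm_num
  rw [Finset.sum_congr rfl fun x _ => key1 x, ← Finset.sum_mul, hxsum,
    Finset.sum_congr rfl fun i _ => hsec i, ← Finset.sum_mul, Finset.sum_sub_distrib,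
    Finset.sum_const, Finset.card_univ, Fintype.card_fin, nsmul_eq_mul, mul_one]
  push_cast
  ring
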